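/- For the ensemble ẋ^θ = A^θ x^θ + b₁u₁ + b₂u₂ on Θ = [θ_min, θ_max] with A^θ = [[0,1],[θ,0]], the reachability subspace condition for approximate controllability in C⁰(Θ,ℝ²) holds: the closure in the C⁰ norm of span{𝒜^r[𝔟₁], 𝒜^r[𝔟₂] : r ≥ 0} equals C⁰(Θ,ℝ²), where 𝒜 : C⁰(Θ,ℝ²) → C⁰(Θ,ℝ²) is 𝒜[Y](θ) = A^θ Y(θ) and 𝔟₁(θ) ≡ b₁ = (1,0)ᵀ, 𝔟₂(θ) ≡ b₂ = (0,1)ᵀ. -/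

import Mathlib

open MeasureTheory Set Filter Topology

noncomputable section

/-- The operator `𝒜 : C⁰(Θ,ℝ²) → C⁰(Θ,ℝ²)`, `𝒜[Y](θ) = A^θ Y(θ)` with
`A^θ = [[0,1],[θ,0]]`, acting on (not necessarily continuous) functions. -/
def Aop (θmin θmax : ℝ) (Y : Icc θmin θmax → EuclideanSpace ℝ (Fin 2)) :
    Icc θmin θmax → EuclideanSpace ℝ (Fin 2) :=
  fun θ => (WithLp.equiv 2 (Fin 2 → ℝ)).symm ![Y θ 1, (θ : ℝ) * Y θ 0]

/-- The constant functions `𝔟₁(θ) ≡ (1,0)ᵀ` and `𝔟₂(θ) ≡ (0,1)ᵀ`. -/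
def bconst (θmin θmax : ℝ) (i : Fin 2) : Icc θmin θmax → EuclideanSpace ℝ (Fin 2) :=
  fun _ => EuclideanSpace.single i 1

/-- The monomial functions `θ ↦ θ^k eᵢ`. -/
def monoFn (θmin θmax : ℝ) (i : Fin 2) (k : ℕ) :
    Icc θmin θmax → EuclideanSpace ℝ (Fin 2) :=
  fun θ => ((θ : ℝ) ^ k) • EuclideanSpace.single i 1

lemma monoFn_apply (θmin θmax : ℝ) (i j : Fin 2) (k : ℕ) (θ : Icc θmin θmax) :
    monoFn θmin θmax i k θ j = if j = i then (θ : ℝ) ^ k else 0 := by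
  simp [monoFn, EuclideanSpace.single_apply, mul_ite]

lemma Aop_monoFn0 (θmin θmax : ℝ) (k : ℕ) :
    Aop θmin θmax (monoFn θmin θmax 0 k) = monoFn θmin θmax 1 (k + 1) := by
  funext θ
  ext j
  fin_cases j <;>
    simp [Aop, monoFn_apply, pow_succ, mul_comm]

lemma Aop_monoFn1 (θmin θmax : ℝ) (k : ℕ) :
    Aop θmin θmax (monoFn θmin θmax 1 k) = monoFn θmin θmax 0 k := by
  funext θ
  ext j
  fin_cases j <;>
    simp [Aop, monoFn_apply]

lemma iterate_bconst0 (θmin θmax : ℝ) (k : ℕ) :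
    (Aop θmin θmax)^[2 * k] (bconst θmin θmax 0) = monoFn θmin θmax 0 k := by
  induction k with
  | zero =>
    funext θ
    ext j
    simp [bconst, monoFn_apply, EuclideanSpace.single_apply]
  | succ k ih =>
    have : 2 * (k + 1) = (2 * k) + 1 + 1 := by ring
    rw [this, Function.iterate_succ_apply', Function.iterate_succ_apply', ih,
      Aop_monoFn0, Aop_monoFn1]

lemma iterate_bconst1 (θmin θmax : ℝ) (k : ℕ) :
    (Aop θmin θmax)^[2 * k] (bconst θmin θmax 1) = monoFn θmin θmax 1 k := by
  induction k with
  | zero =>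
    funext θ
    ext j
    simp [bconst, monoFn_apply, EuclideanSpace.single_apply]
  | succ k ih =>
    have : 2 * (k + 1) = (2 * k) + 1 + 1 := by ring
    rw [this, Function.iterate_succ_apply', Function.iterate_succ_apply', ih,
      Aop_monoFn1, Aop_monoFn0]

lemma sum_smul_apply (θmin θmax : ℝ) (n : ℕ) (c : ℕ → ℝ)
    (F : ℕ → Icc θmin θmax → EuclideanSpace ℝ (Fin 2)) (θ : Icc θmin θmax) (j : Fin 2) :
    (∑ k ∈ Finset.range n, c k • F k) θ j = ∑ k ∈ Finset.range n, c k * F k θ j := by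
  simp only [Finset.sum_apply, PiLp.smul_apply, smul_eq_mul]
  have := map_sum (EuclideanSpace.proj (𝕜 := ℝ) j) (fun k => c k • F k θ) (Finset.range n)
  simp only [PiLp.proj_apply, PiLp.smul_apply, smul_eq_mul] at this
  exact this

/-- the reachability subspace condition for approximate controllability
in `C⁰(Θ,ℝ²)`, `Θ = [θ_min,θ_max]`: the `C⁰`-closure of
`span{𝒜^r[𝔟₁], 𝒜^r[𝔟₂] : r ≥ 0}` equals `C⁰(Θ,ℝ²)`, i.e. every continuous
`Y : Θ → ℝ²` is uniformly approximated by elements of the span. -/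
theorem reachability_span_dense (θmin θmax : ℝ) (h : θmin ≤ θmax)
    (Y : Icc θmin θmax → EuclideanSpace ℝ (Fin 2)) (hY : Continuous Y) :
    ∀ ε > (0 : ℝ),
      ∃ g ∈ Submodule.span ℝ
          {f : Icc θmin θmax → EuclideanSpace ℝ (Fin 2) |
            ∃ r : ℕ, f = (Aop θmin θmax)^[r] (bconst θmin θmax 0) ∨
              f = (Aop θmin θmax)^[r] (bconst θmin θmax 1)},
        ∀ θ, ‖Y θ - g θ‖ ≤ ε := by
  intro ε hε
  have hne : Nonempty (Icc θmin θmax) := ⟨⟨θmin, le_refl _, h⟩⟩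
  -- component functions are continuous
  have hY0 : Continuous fun θ : Icc θmin θmax => Y θ 0 := (continuous_apply (0 : Fin 2)).comp ((PiLp.continuous_ofLp 2 _).comp hY)
  have hY1 : Continuous fun θ : Icc θmin θmax => Y θ 1 := (continuous_apply (1 : Fin 2)).comp ((PiLp.continuous_ofLp 2 _).comp hY)
  -- Weierstrass on each component
  obtain ⟨p₀, hp₀⟩ := exists_polynomial_near_continuousMap θmin θmax ⟨_, hY0⟩ (ε / 2)
    (by linarith)
  obtain ⟨p₁, hp₁⟩ := exists_polynomial_near_continuousMap θmin θmax ⟨_, hY1⟩ (ε / 2)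
    (by linarith)
  -- the approximating element of the span
  set g : Icc θmin θmax → EuclideanSpace ℝ (Fin 2) :=
    (∑ k ∈ Finset.range (p₀.natDegree + 1), p₀.coeff k • monoFn θmin θmax 0 k) +
    (∑ k ∈ Finset.range (p₁.natDegree + 1), p₁.coeff k • monoFn θmin θmax 1 k) with hg
  have hmem : ∀ (i : Fin 2) (k : ℕ), monoFn θmin θmax i k ∈
      Submodule.span ℝ
        {f : Icc θmin θmax → EuclideanSpace ℝ (Fin 2) |
          ∃ r : ℕ, f = (Aop θmin θmax)^[r] (bconst θmin θmax 0) ∨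
            f = (Aop θmin θmax)^[r] (bconst θmin θmax 1)} := by
    intro i k
    apply Submodule.subset_span
    fin_cases i
    · exact ⟨2 * k, Or.inl (iterate_bconst0 θmin θmax k).symm⟩
    · exact ⟨2 * k, Or.inr (iterate_bconst1 θmin θmax k).symm⟩
  refine ⟨g, ?_, ?_⟩
  · rw [hg]
    exact Submodule.add_mem _
      (Submodule.sum_mem _ fun k _ => Submodule.smul_mem _ _ (hmem 0 k))
      (Submodule.sum_mem _ fun k _ => Submodule.smul_mem _ _ (hmem 1 k))
  · intro θ
    -- compute the components of g
    have hg0 : g θ 0 = p₀.eval (θ : ℝ) := by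
      rw [hg]
      simp only [Pi.add_apply, PiLp.add_apply, sum_smul_apply, monoFn_apply]
      rw [Polynomial.eval_eq_sum_range]
      simp
    have hg1 : g θ 1 = p₁.eval (θ : ℝ) := by
      rw [hg]
      simp only [Pi.add_apply, PiLp.add_apply, sum_smul_apply, monoFn_apply]
      rw [Polynomial.eval_eq_sum_range]
      simp
    -- the difference decomposes along the basis
    have hdecomp : Y θ - g θ =
        (Y θ 0 - g θ 0) • EuclideanSpace.single (0 : Fin 2) (1 : ℝ) +
        (Y θ 1 - g θ 1) • EuclideanSpace.single (1 : Fin 2) (1 : ℝ) := by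
      apply (WithLp.equiv 2 (Fin 2 → ℝ)).injective
      funext j
      fin_cases j <;>
        simp [EuclideanSpace.single_apply]
    -- bounds on the components
    have hb0 : |Y θ 0 - g θ 0| ≤ ε / 2 := by
      rw [hg0]
      have := (ContinuousMap.norm_coe_le_norm
        (p₀.toContinuousMapOn (Icc θmin θmax) - ⟨_, hY0⟩) θ)
      simp only [ContinuousMap.sub_apply, Polynomial.toContinuousMapOn_apply,
        Polynomial.toContinuousMap_apply, ContinuousMap.coe_mk] at this
      rw [abs_sub_comm]
      calc |p₀.eval (θ : ℝ) - Y θ 0| ≤ _ := this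
        _ ≤ ε / 2 := le_of_lt hp₀
    have hb1 : |Y θ 1 - g θ 1| ≤ ε / 2 := by
      rw [hg1]
      have := (ContinuousMap.norm_coe_le_norm
        (p₁.toContinuousMapOn (Icc θmin θmax) - ⟨_, hY1⟩) θ)
      simp only [ContinuousMap.sub_apply, Polynomial.toContinuousMapOn_apply,
        Polynomial.toContinuousMap_apply, ContinuousMap.coe_mk] at this
      rw [abs_sub_comm]
      calc |p₁.eval (θ : ℝ) - Y θ 1| ≤ _ := this
        _ ≤ ε / 2 := le_of_lt hp₁
    calc ‖Y θ - g θ‖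
        ≤ ‖(Y θ 0 - g θ 0) • EuclideanSpace.single (0 : Fin 2) (1 : ℝ)‖ +
          ‖(Y θ 1 - g θ 1) • EuclideanSpace.single (1 : Fin 2) (1 : ℝ)‖ := by
          rw [hdecomp]; exact norm_add_le _ _
      _ = |Y θ 0 - g θ 0| + |Y θ 1 - g θ 1| := by
          rw [norm_smul, norm_smul, EuclideanSpace.norm_single, EuclideanSpace.norm_single]
          simp [Real.norm_eq_abs]
      _ ≤ ε / 2 + ε / 2 := add_le_add hb0 hb1
      _ = ε := by ring
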